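/- Let β ≥ 0, c₀ ∈ ℝ, C > 0 and T ≥ 3. Let r : [T,∞) → (0,∞) be a C¹ function with r(t) → ∞ as t → ∞ such that r'(t) = r(t)^{−β} e^{−r(t)+c₀} (1 + h(t)) for all t ≥ T, where |h(t)| ≤ C/ln t. Then r(t) = ln t − β ln ln t + c₀ + O(ln ln t / ln t) as t → ∞. -/

import Mathlib

open Real Filter

lemma aux_exp_le (x : ℝ) (h0 : 0 ≤ x) (h1 : x ≤ 1/2) : Real.exp x ≤ 1 + 2*x := by
  have key : Real.exp x * (1 - x) ≤ 1 := by
    have h2 : 1 - x ≤ Real.exp (-x) := by nlinarith [Real.add_one_le_exp (-x)]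
    calc Real.exp x * (1 - x) ≤ Real.exp x * Real.exp (-x) := by
          nlinarith [Real.exp_pos x]
      _ = 1 := by rw [← Real.exp_add]; simp
  nlinarith [key]

lemma aux_exp_neg_le (x : ℝ) (h0 : 0 ≤ x) (h1 : x ≤ 1) : Real.exp (-x) ≤ 1 - x/2 := by
  have key : Real.exp (-x) * (1 + x) ≤ 1 := by
    calc Real.exp (-x) * (1 + x) ≤ Real.exp (-x) * Real.exp x := by
          nlinarith [Real.exp_pos (-x), Real.add_one_le_exp x]
      _ = 1 := by rw [← Real.exp_add]; simp
  nlinarith [key]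

lemma log_gt_one (t : ℝ) (ht : 3 ≤ t) : 1 < Real.log t := by
  have h1 : Real.exp 1 < 3 := by linarith [Real.exp_one_lt_d9]
  calc 1 = Real.log (Real.exp 1) := (Real.log_exp 1).symm
    _ < Real.log t := Real.log_lt_log (Real.exp_pos 1) (by linarith)

lemma bar_hasDeriv (β c₀ k t : ℝ) (ht : 3 ≤ t) :
    HasDerivAt (fun s => Real.log s - β * Real.log (Real.log s) + c₀
        + k * (Real.log (Real.log s) / Real.log s))
      ((1 - β/Real.log t + k*(1 - Real.log (Real.log t))/(Real.log t)^2)/t) t := by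
  have ht0 : (0:ℝ) < t := by linarith
  have hL1 : 1 < Real.log t := log_gt_one t ht
  have hL0 : (0:ℝ) < Real.log t := by linarith
  have hLne : Real.log t ≠ 0 := ne_of_gt hL0
  have h1 : HasDerivAt Real.log t⁻¹ t := Real.hasDerivAt_log (ne_of_gt ht0)
  have h2 : HasDerivAt (fun s => Real.log (Real.log s)) ((Real.log t)⁻¹ * t⁻¹) t :=
    (Real.hasDerivAt_log hLne).comp t h1
  have h3 : HasDerivAt (fun s => Real.log (Real.log s) / Real.log s)
      (((Real.log t)⁻¹ * t⁻¹ * Real.log t - Real.log (Real.log t) * t⁻¹) / (Real.log t)^2) t :=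
    h2.div h1 hLne
  have h4 := (((h1.sub (h2.const_mul β)).add_const c₀).add (h3.const_mul k))
  refine h4.congr_deriv ?_
  field_simp

lemma sq_loglog_hasDeriv (t : ℝ) (ht : 3 ≤ t) :
    HasDerivAt (fun s => (Real.log (Real.log s))^2)
      (2 * Real.log (Real.log t) * ((Real.log t)⁻¹ * t⁻¹)) t := by
  have ht0 : (0:ℝ) < t := by linarith
  have hL0 : (0:ℝ) < Real.log t := by linarith [log_gt_one t ht]
  have h1 : HasDerivAt Real.log t⁻¹ t := Real.hasDerivAt_log (ne_of_gt ht0)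
  have h2 : HasDerivAt (fun s => Real.log (Real.log s)) ((Real.log t)⁻¹ * t⁻¹) t :=
    (Real.hasDerivAt_log (ne_of_gt hL0)).comp t h1
  simpa using h2.fun_pow 2

-- identity : x^(-β) * exp(-x+c₀) = (L/x)^β * exp(-(x - (L - β*M + c₀)) ... )
lemma rhs_identity (β c₀ k t : ℝ) (ht : 3 ≤ t) (hx : 0 < Real.log t - β * Real.log (Real.log t) + c₀
        + k * (Real.log (Real.log t) / Real.log t)) :
    (Real.log t - β * Real.log (Real.log t) + c₀ + k * (Real.log (Real.log t) / Real.log t))^(-β)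
      * Real.exp (-(Real.log t - β * Real.log (Real.log t) + c₀
          + k * (Real.log (Real.log t) / Real.log t)) + c₀)
    = (Real.log t / (Real.log t - β * Real.log (Real.log t) + c₀
          + k * (Real.log (Real.log t) / Real.log t)))^β
      * Real.exp (-(k * (Real.log (Real.log t) / Real.log t))) / t := by
  have ht0 : (0:ℝ) < t := by linarith
  have hL1 : 1 < Real.log t := log_gt_one t ht
  have hL0 : (0:ℝ) < Real.log t := by linarith
  set L := Real.log t
  set M := Real.log L
  set x := L - β * M + c₀ + k * (M / L) with hxdef
  have e1 : -x + c₀ = β * M + (-(k * (M/L)) + -L) := by rw [hxdef]; ring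
  have e2 : Real.exp (β * M) = L ^ β := by
    rw [Real.rpow_def_of_pos hL0]; ring_nf; rfl
  have e3 : Real.exp (-L) = t⁻¹ := by
    rw [Real.exp_neg]
    congr 1
    exact Real.exp_log ht0
  rw [e1, Real.exp_add, Real.exp_add, e2, e3, Real.div_rpow hL0.le hx.le,
    Real.rpow_neg hx.le]
  field_simp

set_option maxHeartbeats 2000000

lemma key_super (β c₀ C B₀ A K Q L M u m : ℝ) (hβ : 0 ≤ β) (hC : 0 < C) (hB₀ : 0 ≤ B₀)
    (hc1 : -B₀ ≤ c₀) (hc2 : c₀ ≤ B₀)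
    (hA : A = 2*β*(β+B₀+1)) (hK : K = 8*A + 4*C + 4*β + 12)
    (hQdef : Q = 4*A*C + 4*A + 4*C + 4*K + 4*β + 4*β*B₀ + 4*B₀ + 40)
    (hM1 : 1 ≤ M) (hQM : Q * M ≤ L)
    (hu : u = L - β*M + c₀ + K*(M/L)) (hm : m = M/L) :
    (L/u)^β * Real.exp (-(K*m)) * (1 + C/L) + 2*m ≤ 1 - β/L + K*(1-M)/L^2 := by
  have hA0 : 0 ≤ A := by nlinarith
  have hK0 : 12 ≤ K := by nlinarith
  have hQ40 : 40 ≤ Q := by nlinarith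
  have hM0 : (0:ℝ) < M := by linarith
  have hL0 : (0:ℝ) < L := by nlinarith
  have hm0 : 0 < m := by rw [hm]; exact div_pos hM0 hL0
  have hmQ : Q * m ≤ 1 := by
    rw [hm, show Q * (M/L) = Q*M/L by ring, div_le_one hL0]; linarith
  have h1L : 1/L ≤ m := by rw [hm]; gcongr
  have hBM : B₀ ≤ B₀ * M := by nlinarith
  have hbB : β*M + B₀ ≤ L/4 := by
    have h4 : (4*β + 4*B₀) * M ≤ Q * M :=
      mul_le_mul_of_nonneg_right (by nlinarith) (le_of_lt hM0)
    nlinarith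
  have hKm0 : 0 ≤ K*(M/L) := by positivity
  have hu2 : L/2 ≤ u := by rw [hu]; linarith
  have hu0 : 0 < u := by linarith
  have huL : L - u ≤ β*M + B₀ := by rw [hu]; linarith
  have hAm : A*m ≤ 1/2 := by nlinarith
  have hKm1 : K*m ≤ 1 := by nlinarith
  have bound1 : (L/u)^β ≤ 1 + 2*(A*m) := by
    have hLu0 : 0 < L/u := div_pos hL0 hu0
    have hlog : Real.log (L/u) ≤ L/u - 1 := Real.log_le_sub_one_of_pos hLu0
    have hLu : L/u - 1 ≤ 2*(β*M + B₀)/L := by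
      rw [div_sub_one (ne_of_gt hu0), div_le_div_iff₀ hu0 hL0]
      nlinarith [mul_le_mul_of_nonneg_right huL hL0.le,
        mul_le_mul_of_nonneg_left hu2 (show (0:ℝ) ≤ 2*(β*M+B₀) by positivity)]
    have h2 : 2*(β*M + B₀)/L * β ≤ A * m := by
      rw [hm, show A * (M/L) = A*M/L by ring, div_mul_eq_mul_div,
        div_le_div_iff₀ hL0 hL0]
      have hAM : 2*β*(β*M+B₀) ≤ A*M := by
        nlinarith [mul_nonneg (mul_nonneg hβ hB₀) (sub_nonneg.2 hM1),
          mul_nonneg hβ hM0.le]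
      nlinarith [mul_le_mul_of_nonneg_right hAM hL0.le]
    have hexp : Real.log (L/u) * β ≤ A*m := by
      nlinarith [mul_le_mul_of_nonneg_right hlog hβ, mul_le_mul_of_nonneg_right hLu hβ]
    calc (L/u)^β = Real.exp (Real.log (L/u) * β) := by
          rw [Real.rpow_def_of_pos hLu0]
      _ ≤ Real.exp (A*m) := Real.exp_le_exp.2 hexp
      _ ≤ 1 + 2*(A*m) := aux_exp_le _ (by positivity) hAm
  have bound2 : Real.exp (-(K*m)) ≤ 1 - (K*m)/2 := aux_exp_neg_le _ (by positivity) hKm1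
  have bound3 : (1:ℝ) + C/L ≤ 1 + C*m := by
    have : C/L ≤ C*m := by
      rw [div_eq_mul_one_div]; exact mul_le_mul_of_nonneg_left h1L hC.le
    linarith
  have hX1 : (0:ℝ) ≤ (L/u)^β := Real.rpow_nonneg (le_of_lt (div_pos hL0 hu0)) β
  have hX3 : (0:ℝ) ≤ 1 + C/L := by positivity
  have hprod : (L/u)^β * Real.exp (-(K*m)) * (1 + C/L)
      ≤ (1 + 2*(A*m)) * (1 - (K*m)/2) * (1 + C*m) := by
    have h12 : (L/u)^β * Real.exp (-(K*m)) ≤ (1 + 2*(A*m)) * (1 - (K*m)/2) :=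
      mul_le_mul bound1 bound2 (Real.exp_pos _).le (by positivity)
    exact mul_le_mul h12 bound3 hX3 (by nlinarith)
  have hRHS : 1 - β*m - K*(m*m) ≤ 1 - β/L + K*(1-M)/L^2 := by
    have h1 : β/L ≤ β*m := by
      have := mul_le_mul_of_nonneg_left h1L hβ
      rw [mul_one_div] at this; linarith
    have h2 : -(K*(m*m)) ≤ K*(1-M)/L^2 := by
      have e1 : K*(1-M)/L^2 ≥ -(K*M/L^2) := by
        rw [ge_iff_le, neg_le, ← neg_div]
        apply div_le_div_of_nonneg_right ?_ (by positivity)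
        nlinarith
      have e2 : K*M/L^2 = (K*m)*(1/L) := by rw [hm]; field_simp
      have e3 : (K*m)*(1/L) ≤ (K*m)*m := mul_le_mul_of_nonneg_left h1L (by positivity)
      nlinarith
    linarith
  have hfin : (1 + 2*(A*m)) * (1 - (K*m)/2) * (1 + C*m) + 2*m ≤ 1 - β*m - K*(m*m) := by
    have h1 : 2*A+C+2+β ≤ K/4 := by nlinarith
    have h2 : (2*A*C + K)*m ≤ 1 := by
      nlinarith [mul_le_mul_of_nonneg_right
        (show 2*A*C+K ≤ Q by nlinarith [mul_nonneg hA0 hC.le]) hm0.le]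
    have e1 : (1 + 2*(A*m)) * (1 - (K*m)/2) * (1 + C*m)
        = 1 + 2*(A*m) + C*m + 2*(A*m)*(C*m)
          - (K*m)/2*(1 + 2*(A*m) + C*m + 2*(A*m)*(C*m)) := by ring
    have hbr : 1 ≤ 1 + 2*(A*m) + C*m + 2*(A*m)*(C*m) := by
      nlinarith [mul_nonneg hA0 hm0.le, mul_nonneg hC.le hm0.le,
        mul_nonneg (mul_nonneg hA0 hm0.le) (mul_nonneg hC.le hm0.le)]
    have h3 : (K*m)/2 * 1 ≤ (K*m)/2*(1 + 2*(A*m) + C*m + 2*(A*m)*(C*m)) :=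
      mul_le_mul_of_nonneg_left hbr (by positivity)
    have h4 : (2*A+C+2+β)*m ≤ (K/4)*m := mul_le_mul_of_nonneg_right h1 hm0.le
    have h5 : (2*A*C+K)*m*m ≤ 1*m := mul_le_mul_of_nonneg_right h2 hm0.le
    have h6 : 1*m ≤ (K/4)*m :=
      mul_le_mul_of_nonneg_right (by linarith) hm0.le
    rw [e1]
    linarith [h3, h4, h5, h6]
  calc (L/u)^β * Real.exp (-(K*m)) * (1 + C/L) + 2*m
      ≤ (1 + 2*(A*m)) * (1 - (K*m)/2) * (1 + C*m) + 2*m := by linarith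
    _ ≤ 1 - β*m - K*(m*m) := hfin
    _ ≤ 1 - β/L + K*(1-M)/L^2 := hRHS

set_option maxHeartbeats 2000000 in
lemma key_sub (β c₀ C B₀ A K Q L M v m : ℝ) (hβ : 0 ≤ β) (hC : 0 < C) (hB₀ : 0 ≤ B₀)
    (hc1 : -B₀ ≤ c₀) (hc2 : c₀ ≤ B₀)
    (hA : A = 2*β*(β+B₀+1)) (hK : K = 8*A + 4*C + 4*β + 12)
    (hQdef : Q = 4*A*C + 4*A + 4*C + 4*K + 4*β + 4*β*B₀ + 4*B₀ + 40)
    (hM1 : 1 ≤ M) (hQM : Q * M ≤ L)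
    (hv : v = L - β*M + c₀ - K*(M/L)) (hm : m = M/L) :
    1 - β/L - K*(1-M)/L^2 ≤ (L/v)^β * Real.exp (K*m) * (1 - C/L) - 2*m := by
  have hA0 : 0 ≤ A := by nlinarith
  have hK0 : 12 ≤ K := by nlinarith
  have hQ40 : 40 ≤ Q := by nlinarith
  have hM0 : (0:ℝ) < M := by linarith
  have hL0 : (0:ℝ) < L := by nlinarith
  have hm0 : 0 < m := by rw [hm]; exact div_pos hM0 hL0
  have hmQ : Q * m ≤ 1 := by
    rw [hm, show Q * (M/L) = Q*M/L by ring, div_le_one hL0]; linarith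
  have h1L : 1/L ≤ m := by rw [hm]; gcongr
  have hBM : B₀ ≤ B₀ * M := by nlinarith
  have hbB : β*M + B₀ ≤ L/4 := by
    have h4 : (4*β + 4*B₀) * M ≤ Q * M :=
      mul_le_mul_of_nonneg_right (by nlinarith) (le_of_lt hM0)
    nlinarith
  have hKm1 : K*m ≤ 1 := by nlinarith
  have hKM1 : K*(M/L) ≤ 1 := by rw [← hm]; exact hKm1
  have hKM0 : 0 ≤ K*(M/L) := by positivity
  have hL40 : 40 ≤ L := by nlinarith
  have hv2 : L/2 ≤ v := by rw [hv]; linarith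
  have hv0 : 0 < v := by linarith
  have ha0 : 0 ≤ β*B₀ := mul_nonneg hβ hB₀
  have haCm : (β*B₀+C+1)*m ≤ 1/4 := by
    nlinarith [mul_le_mul_of_nonneg_right
      (show 4*(β*B₀+C+1) ≤ Q by nlinarith [mul_nonneg hA0 hC.le]) hm0.le]
  have hbb : 2*(β*B₀)*m ≤ 1/2 := by nlinarith
  have hCm : 2*C*m ≤ 1/2 := by nlinarith
  -- lower bound on (L/v)^β
  have bound1 : 1 - (β*B₀)*m ≤ (L/v)^β := by
    have hvL0 : 0 < v/L := div_pos hv0 hL0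
    have hLv0 : 0 < L/v := div_pos hL0 hv0
    have hlog : Real.log (v/L) ≤ v/L - 1 := Real.log_le_sub_one_of_pos hvL0
    have hvL : v/L - 1 ≤ B₀*m := by
      rw [div_sub_one (ne_of_gt hL0)]
      have h1 : v - L ≤ B₀ := by rw [hv]; nlinarith [mul_nonneg hβ hM0.le]
      have h2 : (v-L)/L ≤ B₀/L := by gcongr
      have h3 : B₀/L = B₀*(1/L) := by ring
      have h4 : B₀*(1/L) ≤ B₀*m := mul_le_mul_of_nonneg_left h1L hB₀
      linarith
    have hexp : -((β*B₀)*m) ≤ Real.log (L/v) * β := by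
      have e1 : Real.log (L/v) = - Real.log (v/L) := by
        rw [← Real.log_inv]; congr 1; rw [inv_div]
      have e2 : Real.log (v/L) * β ≤ (B₀*m)*β :=
        mul_le_mul_of_nonneg_right (by linarith) hβ
      rw [e1]; nlinarith
    calc 1 - (β*B₀)*m ≤ Real.exp (-((β*B₀)*m)) := by
          nlinarith [Real.add_one_le_exp (-((β*B₀)*m))]
      _ ≤ Real.exp (Real.log (L/v) * β) := Real.exp_le_exp.2 hexp
      _ = (L/v)^β := by rw [Real.rpow_def_of_pos hLv0]
  have bound2 : 1 + K*m ≤ Real.exp (K*m) := by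
    nlinarith [Real.add_one_le_exp (K*m)]
  have bound3 : 1 - C*m ≤ 1 - C/L := by
    have : C/L ≤ C*m := by
      rw [div_eq_mul_one_div]; exact mul_le_mul_of_nonneg_left h1L hC.le
    linarith
  have hprod : (1 - (β*B₀)*m) * (1 + K*m) * (1 - C*m)
      ≤ (L/v)^β * Real.exp (K*m) * (1 - C/L) := by
    have h12 : (1 - (β*B₀)*m) * (1 + K*m) ≤ (L/v)^β * Real.exp (K*m) :=
      mul_le_mul bound1 bound2 (by positivity) (Real.rpow_nonneg (div_pos hL0 hv0).le β)
    apply mul_le_mul h12 bound3 (by linarith) ?_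
    positivity
  -- LHS bound
  have hLHS : 1 - β/L - K*(1-M)/L^2 ≤ 1 + K*(m*m) := by
    have h0 : 0 ≤ β/L := by positivity
    have e1 : -(K*(1-M))/L^2 ≤ K*M/L^2 := by
      apply div_le_div_of_nonneg_right ?_ (by positivity)
      nlinarith
    have e2 : K*M/L^2 = (K*m)*(1/L) := by rw [hm]; field_simp
    have e3 : (K*m)*(1/L) ≤ (K*m)*m := mul_le_mul_of_nonneg_left h1L (by positivity)
    have e4 : K*(1-M)/L^2 = -(-(K*(1-M))/L^2) := by ring
    rw [e4]
    linarith [e1, e2, e3, h0]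
  -- final polynomial step
  have hfin : 1 + K*(m*m) ≤ (1 - (β*B₀)*m) * (1 + K*m) * (1 - C*m) - 2*m := by
    have h1 : β*B₀ + C + 2 ≤ K/4 := by nlinarith
    have f1 : (β*B₀+C+2)*m ≤ (K/4)*m := mul_le_mul_of_nonneg_right h1 hm0.le
    have f3 : (K*m)*((β*B₀+C+1)*m) ≤ (K*m)*(1/4) :=
      mul_le_mul_of_nonneg_left haCm (by positivity)
    have f4 : 0 ≤ (β*B₀)*C*(m*m) := by positivity
    have f5 : 0 ≤ (β*B₀)*C*K*(m*m*m) := by positivity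
    nlinarith [f1, f3, f4, f5]
  linarith

set_option maxHeartbeats 1000000 in
lemma bar_lower (β c₀ C B₀ A K Q L M : ℝ) (hβ : 0 ≤ β) (hC : 0 < C) (hB₀ : 0 ≤ B₀)
    (hc1 : -B₀ ≤ c₀) (hc2 : c₀ ≤ B₀)
    (hA : A = 2*β*(β+B₀+1)) (hK : K = 8*A + 4*C + 4*β + 12)
    (hQdef : Q = 4*A*C + 4*A + 4*C + 4*K + 4*β + 4*β*B₀ + 4*B₀ + 40)
    (hM1 : 1 ≤ M) (hQM : Q * M ≤ L) :
    L/2 ≤ L - β*M + c₀ - K*(M/L) ∧ 0 < L ∧ K*(M/L) ≤ 1 ∧ 4*C ≤ L := by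
  have hA0 : 0 ≤ A := by nlinarith
  have hK0 : 12 ≤ K := by nlinarith
  have hQ40 : 40 ≤ Q := by nlinarith
  have hM0 : (0:ℝ) < M := by linarith
  have hL0 : (0:ℝ) < L := by nlinarith
  have hm0 : 0 < M/L := div_pos hM0 hL0
  have hmQ : Q * (M/L) ≤ 1 := by
    rw [show Q * (M/L) = Q*M/L by ring, div_le_one hL0]; linarith
  have hBM : B₀ ≤ B₀ * M := by nlinarith
  have hbB : β*M + B₀ ≤ L/4 := by
    have h4 : (4*β + 4*B₀) * M ≤ Q * M :=
      mul_le_mul_of_nonneg_right (by nlinarith) (le_of_lt hM0)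
    nlinarith
  have hKm1 : K*(M/L) ≤ 1 := by nlinarith
  have hC4 : 4*C ≤ L := by nlinarith
  have hL40 : 40 ≤ L := by nlinarith
  exact ⟨by linarith, hL0, hKm1, hC4⟩

lemma rhs_anti (β c₀ x y : ℝ) (hβ : 0 ≤ β) (hx : 0 < x) (hxy : x ≤ y) :
    y^(-β) * Real.exp (-y + c₀) ≤ x^(-β) * Real.exp (-x + c₀) := by
  have hy : 0 < y := lt_of_lt_of_le hx hxy
  have h1 : y^(-β) ≤ x^(-β) := by
    rw [Real.rpow_neg hx.le, Real.rpow_neg hy.le]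
    exact inv_anti₀ (Real.rpow_pos_of_pos hx β) (Real.rpow_le_rpow hx.le hxy hβ)
  have h2 : Real.exp (-y + c₀) ≤ Real.exp (-x + c₀) := Real.exp_le_exp.2 (by linarith)
  exact mul_le_mul h1 h2 (Real.exp_pos _).le (Real.rpow_nonneg hx.le _)

lemma aux_div1 (a b M L t : ℝ) (ht : t ≠ 0) (hL : L ≠ 0) :
    a/t*b + 2*M/(t*L) = (a*b + 2*(M/L))/t := by field_simp

lemma aux_div2 (a b M L t : ℝ) (ht : t ≠ 0) (hL : L ≠ 0) :
    a/t*b - 2*M/(t*L) = (a*b - 2*(M/L))/t := by field_simp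

set_option maxHeartbeats 1000000 in
lemma super_t (β c₀ C B₀ A K Q t : ℝ) (hβ : 0 ≤ β) (hC : 0 < C) (hB₀ : 0 ≤ B₀)
    (hc1 : -B₀ ≤ c₀) (hc2 : c₀ ≤ B₀)
    (hA : A = 2*β*(β+B₀+1)) (hK : K = 8*A + 4*C + 4*β + 12)
    (hQdef : Q = 4*A*C + 4*A + 4*C + 4*K + 4*β + 4*β*B₀ + 4*B₀ + 40)
    (ht : 3 ≤ t) (hM1 : 1 ≤ Real.log (Real.log t))
    (hQM : Q * Real.log (Real.log t) ≤ Real.log t) :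
    (Real.log t - β * Real.log (Real.log t) + c₀
        + K * (Real.log (Real.log t) / Real.log t))^(-β)
      * Real.exp (-(Real.log t - β * Real.log (Real.log t) + c₀
        + K * (Real.log (Real.log t) / Real.log t)) + c₀)
      * (1 + C / Real.log t)
      + 2 * Real.log (Real.log t) / (t * Real.log t)
    ≤ (1 - β/Real.log t + K*(1 - Real.log (Real.log t))/(Real.log t)^2)/t := by
  have ht0 : (0:ℝ) < t := by linarith
  obtain ⟨hv2, hL0, hKm1, hC4⟩ := bar_lower β c₀ C B₀ A K Q (Real.log t)
    (Real.log (Real.log t)) hβ hC hB₀ hc1 hc2 hA hK hQdef hM1 hQM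
  have hA0 : 0 ≤ A := by nlinarith [mul_nonneg hβ hB₀, sq_nonneg β]
  have hK0 : 12 ≤ K := by nlinarith
  have hM0 : (0:ℝ) < Real.log (Real.log t) := by linarith
  set L := Real.log t with hLdef
  set M := Real.log L with hMdef
  have hKM0 : 0 ≤ K * (M/L) := by positivity
  have hupos : 0 < L - β*M + c₀ + K * (M/L) := by
    have e0 : L - β*M + c₀ + K*(M/L) = (L - β*M + c₀ - K*(M/L)) + 2*(K*(M/L)) := by ring
    rw [e0]; linarith
  have hid := rhs_identity β c₀ K t ht (by rw [← hLdef, ← hMdef]; exact hupos)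
  rw [← hLdef, ← hMdef] at hid
  rw [hid]
  have hpure := key_super β c₀ C B₀ A K Q L M (L - β*M + c₀ + K*(M/L)) (M/L)
    hβ hC hB₀ hc1 hc2 hA hK hQdef hM1 hQM rfl rfl
  have htne : t ≠ 0 := ne_of_gt ht0
  have hLne : L ≠ 0 := ne_of_gt hL0
  rw [aux_div1 _ _ _ _ _ htne hLne]
  exact div_le_div_of_nonneg_right hpure ht0.le

set_option maxHeartbeats 1000000 in
lemma sub_t (β c₀ C B₀ A K Q t : ℝ) (hβ : 0 ≤ β) (hC : 0 < C) (hB₀ : 0 ≤ B₀)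
    (hc1 : -B₀ ≤ c₀) (hc2 : c₀ ≤ B₀)
    (hA : A = 2*β*(β+B₀+1)) (hK : K = 8*A + 4*C + 4*β + 12)
    (hQdef : Q = 4*A*C + 4*A + 4*C + 4*K + 4*β + 4*β*B₀ + 4*B₀ + 40)
    (ht : 3 ≤ t) (hM1 : 1 ≤ Real.log (Real.log t))
    (hQM : Q * Real.log (Real.log t) ≤ Real.log t) :
    (1 - β/Real.log t + (-K)*(1 - Real.log (Real.log t))/(Real.log t)^2)/t
    ≤ (Real.log t - β * Real.log (Real.log t) + c₀
        + (-K) * (Real.log (Real.log t) / Real.log t))^(-β)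
      * Real.exp (-(Real.log t - β * Real.log (Real.log t) + c₀
        + (-K) * (Real.log (Real.log t) / Real.log t)) + c₀)
      * (1 - C / Real.log t)
      - 2 * Real.log (Real.log t) / (t * Real.log t) := by
  have ht0 : (0:ℝ) < t := by linarith
  obtain ⟨hv2, hL0, hKm1, hC4⟩ := bar_lower β c₀ C B₀ A K Q (Real.log t)
    (Real.log (Real.log t)) hβ hC hB₀ hc1 hc2 hA hK hQdef hM1 hQM
  have hA0 : 0 ≤ A := by nlinarith [mul_nonneg hβ hB₀, sq_nonneg β]
  have hK0 : 12 ≤ K := by nlinarith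
  have hM0 : (0:ℝ) < Real.log (Real.log t) := by linarith
  set L := Real.log t with hLdef
  set M := Real.log L with hMdef
  have hvpos : 0 < L - β*M + c₀ + (-K) * (M/L) := by
    have e0 : L - β*M + c₀ + (-K)*(M/L) = L - β*M + c₀ - K*(M/L) := by ring
    rw [e0]; linarith
  have hid := rhs_identity β c₀ (-K) t ht (by rw [← hLdef, ← hMdef]; exact hvpos)
  rw [← hLdef, ← hMdef] at hid
  rw [hid]
  have hpure := key_sub β c₀ C B₀ A K Q L M (L - β*M + c₀ + (-K)*(M/L)) (M/L)
    hβ hC hB₀ hc1 hc2 hA hK hQdef hM1 hQM (by ring) rfl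
  have htne : t ≠ 0 := ne_of_gt ht0
  have hLne : L ≠ 0 := ne_of_gt hL0
  have e2 : -((-K) * (M/L)) = K*(M/L) := by ring
  rw [e2]
  rw [aux_div2 _ _ _ _ _ htne hLne]
  have e3 : (1 - β/L + (-K)*(1-M)/L^2)/t = (1 - β/L - K*(1-M)/L^2)/t := by ring
  rw [e3]
  exact div_le_div_of_nonneg_right hpure ht0.le

set_option maxHeartbeats 1000000 in
/-- **Integration of the modulation ODE for the soliton distance.**
Let `β ≥ 0`, `c₀ ∈ ℝ`, `C > 0`, `T ≥ 3` and let `r : [T,∞) → (0,∞)` be differentiable with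
`r(t) → ∞` and `r'(t) = r(t)^{-β} e^{-r(t)+c₀} (1 + h(t))`, `|h(t)| ≤ C / ln t`.
Then `r(t) = ln t - β ln ln t + c₀ + O(ln ln t / ln t)` as `t → ∞`. -/
theorem modulation_ODE_asymptotics (β c₀ C T : ℝ) (hβ : 0 ≤ β) (hC : 0 < C) (hT : 3 ≤ T)
    (r h : ℝ → ℝ)
    (hrpos : ∀ t, T ≤ t → 0 < r t)
    (hrtop : Tendsto r atTop atTop)
    (hr' : ∀ t, T ≤ t →
      HasDerivAt r (r t ^ (-β) * Real.exp (-r t + c₀) * (1 + h t)) t)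
    (hh : ∀ t, T ≤ t → |h t| ≤ C / Real.log t) :
    ∃ C' > 0, ∃ T' ≥ T, ∀ t ≥ T',
      |r t - (Real.log t - β * Real.log (Real.log t) + c₀)| ≤
        C' * Real.log (Real.log t) / Real.log t := by
  obtain ⟨B₀, hB₀def⟩ : ∃ x:ℝ, x = |c₀| := ⟨_, rfl⟩
  have hB₀ : 0 ≤ B₀ := hB₀def ▸ abs_nonneg c₀
  have hc1 : -B₀ ≤ c₀ := by rw [hB₀def]; exact neg_abs_le c₀
  have hc2 : c₀ ≤ B₀ := by rw [hB₀def]; exact le_abs_self c₀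
  obtain ⟨A, hA⟩ : ∃ x:ℝ, x = 2*β*(β+B₀+1) := ⟨_, rfl⟩
  obtain ⟨K, hK⟩ : ∃ x:ℝ, x = 8*A + 4*C + 4*β + 12 := ⟨_, rfl⟩
  obtain ⟨Q, hQdef⟩ : ∃ x:ℝ, x = 4*A*C + 4*A + 4*C + 4*K + 4*β + 4*β*B₀ + 4*B₀ + 40 := ⟨_, rfl⟩
  have hA0 : 0 ≤ A := by nlinarith [mul_nonneg hβ hB₀, sq_nonneg β]
  have hK0 : 12 ≤ K := by nlinarith
  have hQ0 : 40 ≤ Q := by nlinarith [mul_nonneg hA0 hC.le, mul_nonneg hβ hB₀]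
  have hloglog : Tendsto (fun t:ℝ => Real.log (Real.log t)) atTop atTop :=
    Real.tendsto_log_atTop.comp Real.tendsto_log_atTop
  have hratio : Tendsto (fun t:ℝ => Real.log (Real.log t) / Real.log t) atTop (nhds 0) := by
    have h1 := Real.isLittleO_log_id_atTop.tendsto_div_nhds_zero
    have h2 := h1.comp Real.tendsto_log_atTop
    simpa [Function.comp_def] using h2
  have hev : ∀ᶠ t in atTop, T ≤ t ∧ 3 ≤ t ∧ 1 ≤ Real.log (Real.log t) ∧
      Q * Real.log (Real.log t) ≤ Real.log t := by
    have e4 : ∀ᶠ t:ℝ in atTop, Real.log (Real.log t) / Real.log t < 1/(Q+1) :=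
      hratio.eventually_lt_const (by positivity)
    filter_upwards [eventually_ge_atTop T, eventually_ge_atTop (3:ℝ),
      hloglog.eventually_ge_atTop 1, e4] with t h1 h2 h3 h4
    refine ⟨h1, h2, h3, ?_⟩
    have hL1 : 1 < Real.log t := log_gt_one t h2
    have hL0 : (0:ℝ) < Real.log t := by linarith
    have hQ1 : (0:ℝ) < Q + 1 := by linarith
    have hML : Real.log (Real.log t) < 1/(Q+1) * Real.log t := by
      have h5 := mul_lt_mul_of_pos_right h4 hL0
      rwa [div_mul_cancel₀ _ (ne_of_gt hL0)] at h5
    have hqq : (Q+1) * (1/(Q+1)) = 1 := mul_one_div_cancel (ne_of_gt hQ1)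
    nlinarith [mul_lt_mul_of_pos_left hML hQ1]
  obtain ⟨T₁, hT₁⟩ := eventually_atTop.1 hev
  set T₀ := max T₁ (max T 3) with hT₀def
  have hT₀good : ∀ t, T₀ ≤ t → T ≤ t ∧ 3 ≤ t ∧ 1 ≤ Real.log (Real.log t) ∧
      Q * Real.log (Real.log t) ≤ Real.log t :=
    fun t ht => hT₁ t (le_trans (le_max_left _ _) ht)
  have hTT₀ : T ≤ T₀ := le_trans (le_max_left T 3) (le_max_right _ _)
  set ub : ℝ → ℝ := fun s => Real.log s - β * Real.log (Real.log s) + c₀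
      + K * (Real.log (Real.log s) / Real.log s) with hub
  set vb : ℝ → ℝ := fun s => Real.log s - β * Real.log (Real.log s) + c₀
      + (-K) * (Real.log (Real.log s) / Real.log s) with hvb
  set Du : ℝ → ℝ := fun s =>
      (1 - β/Real.log s + K*(1 - Real.log (Real.log s))/(Real.log s)^2)/s with hDu
  set Dv : ℝ → ℝ := fun s =>
      (1 - β/Real.log s + (-K)*(1 - Real.log (Real.log s))/(Real.log s)^2)/s with hDv
  set rp : ℝ → ℝ := fun s => r s ^ (-β) * Real.exp (-r s + c₀) * (1 + h s) with hrp
  have hDuAt : ∀ x, T₀ ≤ x → HasDerivAt ub (Du x) x := by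
    intro x hx
    simp only [hub, hDu]
    exact bar_hasDeriv β c₀ K x (hT₀good x hx).2.1
  have hDvAt : ∀ x, T₀ ≤ x → HasDerivAt vb (Dv x) x := by
    intro x hx
    simp only [hvb, hDv]
    exact bar_hasDeriv β c₀ (-K) x (hT₀good x hx).2.1
  have hrAt : ∀ x, T₀ ≤ x → HasDerivAt r (rp x) x := by
    intro x hx
    simp only [hrp]
    exact hr' x (hT₀good x hx).1
  have hbarpos : ∀ x, T₀ ≤ x → 0 < vb x ∧ 0 < ub x ∧ 4*C ≤ Real.log x := by
    intro x hx
    obtain ⟨h1,h2,h3,h4⟩ := hT₀good x hx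
    obtain ⟨hv2, hL0, hKm1, hC4⟩ := bar_lower β c₀ C B₀ A K Q _ _
      hβ hC hB₀ hc1 hc2 hA hK hQdef h3 h4
    have hKM0 : 0 ≤ K * (Real.log (Real.log x)/Real.log x) :=
      mul_nonneg (by linarith) (div_nonneg (by linarith) hL0.le)
    have hvx : vb x = Real.log x - β*Real.log (Real.log x) + c₀
        - K*(Real.log (Real.log x)/Real.log x) := by simp only [hvb]; ring
    have hux : ub x = vb x + 2*(K * (Real.log (Real.log x)/Real.log x)) := by
      simp only [hub, hvb]; ring
    have hv0 : 0 < vb x := by rw [hvx]; linarith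
    exact ⟨hv0, by rw [hux]; linarith, hC4⟩
  have hsuper : ∀ x, T₀ ≤ x → (ub x)^(-β) * Real.exp (-(ub x) + c₀) * (1 + C/Real.log x)
      + 2*Real.log (Real.log x)/(x*Real.log x) ≤ Du x := by
    intro x hx
    obtain ⟨h1,h2,h3,h4⟩ := hT₀good x hx
    simp only [hub, hDu]
    exact super_t β c₀ C B₀ A K Q x hβ hC hB₀ hc1 hc2 hA hK hQdef h2 h3 h4
  have hsub : ∀ x, T₀ ≤ x → Dv x ≤ (vb x)^(-β) * Real.exp (-(vb x) + c₀) * (1 - C/Real.log x)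
      - 2*Real.log (Real.log x)/(x*Real.log x) := by
    intro x hx
    obtain ⟨h1,h2,h3,h4⟩ := hT₀good x hx
    simp only [hvb, hDv]
    exact sub_t β c₀ C B₀ A K Q x hβ hC hB₀ hc1 hc2 hA hK hQdef h2 h3 h4
  have hr_upper : ∀ x, T₀ ≤ x →
      rp x ≤ (r x)^(-β) * Real.exp (-r x + c₀) * (1 + C/Real.log x) := by
    intro x hx
    obtain ⟨h1,h2,h3,h4⟩ := hT₀good x hx
    have hL0 : (0:ℝ) < Real.log x := by linarith [log_gt_one x h2]
    have h5 : h x ≤ C/Real.log x := (abs_le.1 (hh x h1)).2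
    have h6 : 0 ≤ (r x)^(-β) * Real.exp (-r x + c₀) :=
      mul_nonneg (Real.rpow_nonneg (hrpos x h1).le _) (Real.exp_pos _).le
    simp only [hrp]
    rw [mul_assoc, mul_assoc]
    exact mul_le_mul_of_nonneg_left (by
      exact mul_le_mul_of_nonneg_left (by linarith) (Real.exp_pos _).le) (Real.rpow_nonneg (hrpos x h1).le _)
  have hr_lower : ∀ x, T₀ ≤ x →
      (r x)^(-β) * Real.exp (-r x + c₀) * (1 - C/Real.log x) ≤ rp x := by
    intro x hx
    obtain ⟨h1,h2,h3,h4⟩ := hT₀good x hx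
    have hL0 : (0:ℝ) < Real.log x := by linarith [log_gt_one x h2]
    have h5 : -(C/Real.log x) ≤ h x := (abs_le.1 (hh x h1)).1
    simp only [hrp]
    rw [mul_assoc, mul_assoc]
    exact mul_le_mul_of_nonneg_left (by
      exact mul_le_mul_of_nonneg_left (by linarith) (Real.exp_pos _).le) (Real.rpow_nonneg (hrpos x h1).le _)
  have htend2 : Tendsto (fun s:ℝ => (Real.log (Real.log s))^2) atTop atTop := by
    have h2 := (tendsto_pow_atTop (two_ne_zero)).comp hloglog
    simpa [Function.comp_def] using h2
  have hdive : ∀ x:ℝ, 3 ≤ x → 2*Real.log (Real.log x) * ((Real.log x)⁻¹ * x⁻¹)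
      = 2*Real.log (Real.log x)/(x*Real.log x) := by
    intro x hx
    have hx0 : (0:ℝ) < x := by linarith
    have hL0 : (0:ℝ) < Real.log x := by linarith [log_gt_one x hx]
    rw [div_eq_mul_inv, mul_inv]
    ring
  -- capture from above
  have hcapU : ∃ t₂, T₀ ≤ t₂ ∧ r t₂ ≤ ub t₂ := by
    by_contra hcon
    push_neg at hcon
    set φ : ℝ → ℝ := fun s => r s - ub s + (Real.log (Real.log s))^2 with hφ
    have hφd : ∀ x, T₀ ≤ x → HasDerivAt φ
        (rp x - Du x + 2*Real.log (Real.log x) * ((Real.log x)⁻¹ * x⁻¹)) x := by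
      intro x hx
      simp only [hφ]
      exact ((hrAt x hx).sub (hDuAt x hx)).add (sq_loglog_hasDeriv x (hT₀good x hx).2.1)
    have hφnonpos : ∀ x ∈ interior (Set.Ici T₀), deriv φ x ≤ 0 := by
      intro x hx
      rw [interior_Ici] at hx
      have hx0 : T₀ ≤ x := le_of_lt hx
      obtain ⟨h1,h2,h3,h4⟩ := hT₀good x hx0
      have hL0 : (0:ℝ) < Real.log x := by linarith [log_gt_one x h2]
      rw [(hφd x hx0).deriv]
      obtain ⟨hvb0, hub0, hC4⟩ := hbarpos x hx0
      have hle : ub x ≤ r x := (hcon x hx0).le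
      have m1 := hr_upper x hx0
      have m2 : (r x)^(-β) * Real.exp (-r x + c₀) ≤ (ub x)^(-β) * Real.exp (-(ub x) + c₀) := by
        have := rhs_anti β c₀ (ub x) (r x) hβ hub0 hle
        convert this using 3 <;> ring
      have m2' : (r x)^(-β) * Real.exp (-r x + c₀) * (1 + C/Real.log x)
          ≤ (ub x)^(-β) * Real.exp (-(ub x) + c₀) * (1 + C/Real.log x) :=
        mul_le_mul_of_nonneg_right m2 (by positivity)
      have m3 := hsuper x hx0
      rw [hdive x h2]
      linarith
    have hφcont : ContinuousOn φ (Set.Ici T₀) :=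
      fun x hx => ((hφd x hx).continuousAt.continuousWithinAt)
    have hφdiff : DifferentiableOn ℝ φ (interior (Set.Ici T₀)) := by
      intro x hx
      rw [interior_Ici] at hx
      exact ((hφd x hx.le).differentiableAt.differentiableWithinAt)
    have hanti : AntitoneOn φ (Set.Ici T₀) :=
      antitoneOn_of_deriv_nonpos (convex_Ici T₀) hφcont hφdiff hφnonpos
    obtain ⟨t₃, ht₃⟩ := ((htend2.eventually_gt_atTop (φ T₀)).and (eventually_ge_atTop T₀)).exists
    have hmono : φ t₃ ≤ φ T₀ := hanti Set.self_mem_Ici (Set.mem_Ici.2 ht₃.2) ht₃.2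
    have hgt := hcon t₃ ht₃.2
    have he : φ t₃ = r t₃ - ub t₃ + (Real.log (Real.log t₃))^2 := by simp only [hφ]
    linarith [ht₃.1]
  -- capture from below
  have hcapL : ∃ t₂, T₀ ≤ t₂ ∧ vb t₂ ≤ r t₂ := by
    by_contra hcon
    push_neg at hcon
    set ψ : ℝ → ℝ := fun s => vb s - r s + (Real.log (Real.log s))^2 with hψ
    have hψd : ∀ x, T₀ ≤ x → HasDerivAt ψ
        (Dv x - rp x + 2*Real.log (Real.log x) * ((Real.log x)⁻¹ * x⁻¹)) x := by
      intro x hx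
      simp only [hψ]
      exact ((hDvAt x hx).sub (hrAt x hx)).add (sq_loglog_hasDeriv x (hT₀good x hx).2.1)
    have hψnonpos : ∀ x ∈ interior (Set.Ici T₀), deriv ψ x ≤ 0 := by
      intro x hx
      rw [interior_Ici] at hx
      have hx0 : T₀ ≤ x := le_of_lt hx
      obtain ⟨h1,h2,h3,h4⟩ := hT₀good x hx0
      have hL0 : (0:ℝ) < Real.log x := by linarith [log_gt_one x h2]
      rw [(hψd x hx0).deriv]
      obtain ⟨hvb0, hub0, hC4⟩ := hbarpos x hx0
      have hle : r x ≤ vb x := (hcon x hx0).le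
      have m1 := hr_lower x hx0
      have m2 : (vb x)^(-β) * Real.exp (-(vb x) + c₀) ≤ (r x)^(-β) * Real.exp (-r x + c₀) := by
        have := rhs_anti β c₀ (r x) (vb x) hβ (hrpos x h1) hle
        convert this using 3 <;> ring
      have hCL : 0 ≤ 1 - C/Real.log x := by
        have : C/Real.log x ≤ 1/4 := by
          rw [div_le_div_iff₀ hL0 (by norm_num : (0:ℝ) < 4)]
          linarith
        linarith
      have m2' : (vb x)^(-β) * Real.exp (-(vb x) + c₀) * (1 - C/Real.log x)
          ≤ (r x)^(-β) * Real.exp (-r x + c₀) * (1 - C/Real.log x) :=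
        mul_le_mul_of_nonneg_right m2 hCL
      have m3 := hsub x hx0
      rw [hdive x h2]
      linarith
    have hψcont : ContinuousOn ψ (Set.Ici T₀) :=
      fun x hx => ((hψd x hx).continuousAt.continuousWithinAt)
    have hψdiff : DifferentiableOn ℝ ψ (interior (Set.Ici T₀)) := by
      intro x hx
      rw [interior_Ici] at hx
      exact ((hψd x hx.le).differentiableAt.differentiableWithinAt)
    have hanti : AntitoneOn ψ (Set.Ici T₀) :=
      antitoneOn_of_deriv_nonpos (convex_Ici T₀) hψcont hψdiff hψnonpos
    obtain ⟨t₃, ht₃⟩ := ((htend2.eventually_gt_atTop (ψ T₀)).and (eventually_ge_atTop T₀)).exists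
    have hmono : ψ t₃ ≤ ψ T₀ := hanti Set.self_mem_Ici (Set.mem_Ici.2 ht₃.2) ht₃.2
    have hgt := hcon t₃ ht₃.2
    have he : ψ t₃ = vb t₃ - r t₃ + (Real.log (Real.log t₃))^2 := by simp only [hψ]
    linarith [ht₃.1]
  obtain ⟨t₂, ht₂ge, ht₂le⟩ := hcapU
  obtain ⟨t₄, ht₄ge, ht₄le⟩ := hcapL
  have hstayU : ∀ t, t₂ ≤ t → r t ≤ ub t := by
    intro t ht
    have key : ∀ ⦃x⦄, x ∈ Set.Icc t₂ t → r x ≤ ub x := by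
      refine image_le_of_deriv_right_lt_deriv_boundary' (f' := rp) (B' := Du)
        ?_ ?_ ht₂le ?_ ?_ ?_
      · exact fun x hx => (hrAt x (le_trans ht₂ge hx.1)).continuousAt.continuousWithinAt
      · exact fun x hx => (hrAt x (le_trans ht₂ge hx.1)).hasDerivWithinAt
      · exact fun x hx => (hDuAt x (le_trans ht₂ge hx.1)).continuousAt.continuousWithinAt
      · exact fun x hx => (hDuAt x (le_trans ht₂ge hx.1)).hasDerivWithinAt
      · intro x hx hrx
        have hx0 : T₀ ≤ x := le_trans ht₂ge hx.1
        obtain ⟨h1,h2,h3,h4⟩ := hT₀good x hx0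
        have hL0 : (0:ℝ) < Real.log x := by linarith [log_gt_one x h2]
        have hx3 : (0:ℝ) < x := by linarith
        have m1 := hr_upper x hx0
        have m3 := hsuper x hx0
        have hposM : 0 < 2*Real.log (Real.log x)/(x*Real.log x) :=
          div_pos (by linarith) (by positivity)
        have m2 : (r x)^(-β) * Real.exp (-r x + c₀) * (1 + C/Real.log x)
            = (ub x)^(-β) * Real.exp (-(ub x) + c₀) * (1 + C/Real.log x) := by
          rw [hrx]
        linarith
    exact key ⟨ht, le_refl t⟩
  have hstayL : ∀ t, t₄ ≤ t → vb t ≤ r t := by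
    intro t ht
    have key : ∀ ⦃x⦄, x ∈ Set.Icc t₄ t → vb x ≤ r x := by
      refine image_le_of_deriv_right_lt_deriv_boundary' (f' := Dv) (B' := rp)
        ?_ ?_ ht₄le ?_ ?_ ?_
      · exact fun x hx => (hDvAt x (le_trans ht₄ge hx.1)).continuousAt.continuousWithinAt
      · exact fun x hx => (hDvAt x (le_trans ht₄ge hx.1)).hasDerivWithinAt
      · exact fun x hx => (hrAt x (le_trans ht₄ge hx.1)).continuousAt.continuousWithinAt
      · exact fun x hx => (hrAt x (le_trans ht₄ge hx.1)).hasDerivWithinAt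
      · intro x hx hrx
        have hx0 : T₀ ≤ x := le_trans ht₄ge hx.1
        obtain ⟨h1,h2,h3,h4⟩ := hT₀good x hx0
        have hL0 : (0:ℝ) < Real.log x := by linarith [log_gt_one x h2]
        have hx3 : (0:ℝ) < x := by linarith
        have m1 := hr_lower x hx0
        have m3 := hsub x hx0
        have hposM : 0 < 2*Real.log (Real.log x)/(x*Real.log x) :=
          div_pos (by linarith) (by positivity)
        have m2 : (vb x)^(-β) * Real.exp (-(vb x) + c₀) * (1 - C/Real.log x)
            = (r x)^(-β) * Real.exp (-r x + c₀) * (1 - C/Real.log x) := by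
          rw [hrx]
        linarith
    exact key ⟨ht, le_refl t⟩
  refine ⟨K, by linarith, max T₀ (max t₂ t₄), le_trans hTT₀ (le_max_left _ _), ?_⟩
  intro t ht
  have htT₀ : T₀ ≤ t := le_trans (le_max_left _ _) ht
  have ht₂t : t₂ ≤ t := le_trans (le_trans (le_max_left _ _) (le_max_right T₀ _)) ht
  have ht₄t : t₄ ≤ t := le_trans (le_trans (le_max_right _ _) (le_max_right T₀ _)) ht
  have hu := hstayU t ht₂t
  have hv := hstayL t ht₄t
  simp only [hub] at hu
  simp only [hvb] at hv
  have he : K * Real.log (Real.log t) / Real.log t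
      = K * (Real.log (Real.log t) / Real.log t) := by ring
  rw [abs_le, he]
  constructor <;> linarith
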